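/- The mutation operator M has sensitive dependence on initial conditions on (X_N, d) with sensitivity constant N + (⌊N/2⌋ + 1)/N: there exists δ₀ = N + (⌊N/2⌋ + 1)/N > 0 such that for every X ∈ X_N and every ε > 0 there exist Y ∈ B(X, ε) and n ∈ ℕ with d(M^n(X), M^n(Y)) ≥ δ₀. -/

import Mathlib

/-- The discrete metric on ℝ: `ddelta x y = 1` if `x ≠ y`, and `0` otherwise. -/
noncomputable def ddelta (x y : ℝ) : ℝ := if x = y then 0 else 1

/-- `Fdel (x₁, x₂) = |x₁| + δ(0, x₂)`. -/
noncomputable def Fdel (x : ℝ × ℝ) : ℝ := |x.1| + ddelta 0 x.2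

/-- A single mutation: a position in `{1,…,N}` together with a nucleotide in `{1,2,3,4}`
(encoded with `Fin N` and `Fin 4`). -/
abbrev Mut (N : ℕ) := Fin N × Fin 4

/-- A mutations sequence: an infinite sequence of mutations. -/
abbrev MutSeq (N : ℕ) := ℕ → Mut N

/-- A genome of size `N`: a sequence of `N` nucleotides in `{1,2,3,4}` (encoded by `Fin 4`,
where `0,1,2,3` stand for the labels `1,2,3,4`, i.e. `A,C,G,T`). -/
abbrev Genome (N : ℕ) := Fin N → Fin 4

/-- The phase space `X_N = {1,2,3,4}^N × S_N`. -/
abbrev Phase (N : ℕ) := Genome N × MutSeq N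

/-- A mutation regarded as a pair of real numbers, using the labels
`1,…,N` for positions and `1,2,3,4` for nucleotides. -/
noncomputable def mutR {N : ℕ} (m : Mut N) : ℝ × ℝ :=
  ((m.1.1 : ℝ) + 1, (m.2.1 : ℝ) + 1)

/-- `d_G(G, Ǧ) = Σ_{k=1}^{N} δ(G_k, Ǧ_k)`, with `δ` the discrete metric. -/
noncomputable def dG {N : ℕ} (G G' : Genome N) : ℝ :=
  ∑ k : Fin N, if G k = G' k then (0 : ℝ) else 1

/-- `d_S(S, Š) = (9/N) Σ_{k=0}^{∞} F(S^k − Š^k)/10^(k+1)`. -/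
noncomputable def dS {N : ℕ} (S S' : MutSeq N) : ℝ :=
  (9 / N) * ∑' k : ℕ, Fdel (mutR (S k) - mutR (S' k)) / 10 ^ (k + 1)

/-- The distance `d((G,S), (Ǧ,Š)) = d_G(G,Ǧ) + d_S(S,Š)` on the phase space. -/
noncomputable def dX {N : ℕ} (X Y : Phase N) : ℝ := dG X.1 Y.1 + dS X.2 Y.2

/-- The mutation operator `M(G, S) = (G', σ(S))`: the nucleotide of `G` at position `(S⁰)₁`
is replaced by the nucleotide `(S⁰)₂`, and the mutations sequence is shifted. -/
noncomputable def Mop {N : ℕ} (X : Phase N) : Phase N :=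
  (Function.update X.1 (X.2 0).1 (X.2 0).2, fun k => X.2 (k + 1))

/-- A set `U ⊆ X_N` is open for the metric `d` if around any of its points it
contains an open ball of positive radius. -/
def IsOpenD {N : ℕ} (U : Set (Phase N)) : Prop :=
  ∀ x ∈ U, ∃ ε > 0, ∀ y, dX x y < ε → y ∈ U


section AuxLemmas

variable {N : ℕ}

lemma ddelta_nonneg (x y : ℝ) : 0 ≤ ddelta x y := by
  unfold ddelta; split <;> norm_num

lemma Fdel_nonneg' (x : ℝ × ℝ) : 0 ≤ Fdel x :=
  add_nonneg (abs_nonneg _) (ddelta_nonneg _ _)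

lemma Fdel_mut_le (a b : Mut N) : Fdel (mutR a - mutR b) ≤ N := by
  have ha : (a.1.1 : ℝ) + 1 ≤ N := by exact_mod_cast a.1.2
  have hb : (b.1.1 : ℝ) + 1 ≤ N := by exact_mod_cast b.1.2
  have ha0 : (0:ℝ) ≤ (a.1.1 : ℝ) := Nat.cast_nonneg _
  have hb0 : (0:ℝ) ≤ (b.1.1 : ℝ) := Nat.cast_nonneg _
  unfold Fdel mutR
  simp only [Prod.fst_sub, Prod.snd_sub]
  have h1 : |((a.1.1 : ℝ) + 1) - ((b.1.1 : ℝ) + 1)| ≤ (N:ℝ) - 1 := by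
    rw [abs_sub_le_iff]; constructor <;> linarith
  have h2 : ddelta 0 (((a.2.1 : ℝ) + 1) - ((b.2.1 : ℝ) + 1)) ≤ 1 := by
    unfold ddelta; split <;> norm_num
  linarith

lemma summable_term (S S' : MutSeq N) :
    Summable (fun k : ℕ => Fdel (mutR (S k) - mutR (S' k)) / 10 ^ (k + 1)) := by
  apply Summable.of_nonneg_of_le
    (fun k => div_nonneg (Fdel_nonneg' _) (by positivity))
    (g := fun k : ℕ => Fdel (mutR (S k) - mutR (S' k)) / 10 ^ (k + 1))
    (f := fun k : ℕ => (N:ℝ) * ((1:ℝ)/10) ^ (k + 1))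
  · intro k
    have h1 : Fdel (mutR (S k) - mutR (S' k)) ≤ N := Fdel_mut_le _ _
    have h2 : ((1:ℝ)/10) ^ (k+1) = 1 / 10 ^ (k+1) := by rw [one_div_pow]
    rw [h2, mul_one_div]
    gcongr
    all_goals exact Fdel_mut_le _ _
  · have : Summable (fun k : ℕ => (N:ℝ) * (1/10) * (1/10)^k) :=
      (summable_geometric_of_lt_one (by norm_num) (by norm_num)).mul_left _
    convert this using 2 with k
    rw [pow_succ']; ring

lemma summable_pow_succ : Summable (fun k : ℕ => ((1:ℝ)/10) ^ (k + 1)) := by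
  have : Summable (fun k : ℕ => ((1:ℝ)/10) * (1/10)^k) :=
    (summable_geometric_of_lt_one (by norm_num) (by norm_num)).mul_left _
  convert this using 2 with k
  rw [pow_succ']

lemma tsum_pow_succ : ∑' k : ℕ, ((1:ℝ)/10) ^ (k + 1) = 1 / 9 := by
  have h : ∑' k : ℕ, ((1:ℝ)/10) ^ k = (1 - 1/10)⁻¹ :=
    tsum_geometric_of_lt_one (by norm_num) (by norm_num)
  calc ∑' k : ℕ, ((1:ℝ)/10) ^ (k + 1) = ∑' k : ℕ, (1/10) * ((1:ℝ)/10) ^ k := by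
        congr 1; funext k; rw [pow_succ']
    _ = (1/10) * ∑' k : ℕ, ((1:ℝ)/10) ^ k := tsum_mul_left
    _ = 1 / 9 := by rw [h]; norm_num

lemma dS_le_of_agree (hN : 1 ≤ N) (S S' : MutSeq N) (m : ℕ) (h : ∀ k < m, S k = S' k) :
    dS S S' ≤ ((1:ℝ)/10) ^ m := by
  have hNpos : (0:ℝ) < N := by exact_mod_cast hN
  set f := fun k : ℕ => Fdel (mutR (S k) - mutR (S' k)) / 10 ^ (k + 1) with hf
  have hsum : Summable f := summable_term S S'
  have h0 : ∀ k < m, f k = 0 := by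
    intro k hk
    simp only [hf, h k hk, sub_self]
    have : Fdel ((0:ℝ×ℝ)) = 0 := by
      unfold Fdel ddelta; simp
    rw [this, zero_div]
  have key : ∑' k, f k = ∑' k, f (k + m) := by
    rw [← Summable.sum_add_tsum_nat_add m hsum, Finset.sum_eq_zero, zero_add]
    intro i hi; exact h0 i (Finset.mem_range.mp hi)
  have hshift : Summable (fun k => f (k + m)) := (summable_nat_add_iff m).mpr hsum
  have hRS : Summable (fun k : ℕ => ((N:ℝ) * (1/10)^(m+1)) * (1/10)^k) :=
    (summable_geometric_of_lt_one (by norm_num) (by norm_num)).mul_left _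
  have hle : ∑' k, f (k + m) ≤ ∑' k : ℕ, ((N:ℝ) * (1/10)^(m+1)) * (1/10)^k := by
    apply Summable.tsum_le_tsum _ hshift hRS
    intro k
    have h1 : f (k + m) ≤ (N:ℝ) / 10 ^ (k + m + 1) := by
      simp only [hf]
      gcongr
      all_goals exact Fdel_mut_le _ _
    refine h1.trans_eq ?_
    rw [show (10:ℝ)^(k+m+1) = 10^(m+1) * 10^k by rw [← pow_add]; ring_nf]
    field_simp
    rw [one_div_pow, one_div_pow]; field_simp
  have hval : ∑' k : ℕ, ((N:ℝ) * (1/10)^(m+1)) * (1/10)^k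
      = (N:ℝ) * (1/10)^(m+1) * (10/9) := by
    rw [tsum_mul_left, tsum_geometric_of_lt_one (by norm_num) (by norm_num)]
    norm_num
  have : ∑' k, f k ≤ (N:ℝ) * (1/10)^(m+1) * (10/9) := by
    rw [key]; exact hle.trans_eq hval
  unfold dS
  rw [← hf]
  calc (9 / (N:ℝ)) * ∑' k, f k ≤ (9 / (N:ℝ)) * ((N:ℝ) * (1/10)^(m+1) * (10/9)) := by
        apply mul_le_mul_of_nonneg_left this (by positivity)
    _ = (1/10)^m := by
        rw [pow_succ]
        field_simp

lemma dS_ge (hN : 1 ≤ N) (S S' : MutSeq N) (c : ℕ)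
    (h : ∀ k, (c:ℝ) ≤ Fdel (mutR (S k) - mutR (S' k))) :
    (c:ℝ) / N ≤ dS S S' := by
  have hNpos : (0:ℝ) < N := by exact_mod_cast hN
  have hsum : Summable (fun k : ℕ => Fdel (mutR (S k) - mutR (S' k)) / 10 ^ (k + 1)) :=
    summable_term S S'
  have hlow : Summable (fun k : ℕ => (c:ℝ) * (1/10)^(k+1)) := summable_pow_succ.mul_left _
  have hle : ∑' k : ℕ, (c:ℝ) * (1/10)^(k+1)
      ≤ ∑' k : ℕ, Fdel (mutR (S k) - mutR (S' k)) / 10 ^ (k + 1) := by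
    apply Summable.tsum_le_tsum _ hlow hsum
    intro k
    have h2 : ((1:ℝ)/10) ^ (k+1) = 1 / 10 ^ (k+1) := by rw [one_div_pow]
    rw [h2, mul_one_div]
    gcongr
    exact h k
  have hval : ∑' k : ℕ, (c:ℝ) * (1/10)^(k+1) = (c:ℝ) / 9 := by
    rw [tsum_mul_left, tsum_pow_succ]; ring
  unfold dS
  calc (c:ℝ) / N = (9 / (N:ℝ)) * ((c:ℝ)/9) := by field_simp
    _ ≤ _ := by
        apply mul_le_mul_of_nonneg_left _ (by positivity)
        rw [← hval]; exact hle

lemma Mop_iter_snd (X : Phase N) (n : ℕ) :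
    ((Mop (N := N))^[n] X).2 = fun k => X.2 (k + n) := by
  induction n with
  | zero => simp
  | succ n ih =>
    rw [Function.iterate_succ_apply']
    funext k
    show ((Mop (N := N))^[n] X).2 (k + 1) = X.2 (k + (n + 1))
    have harg : k + 1 + n = k + (n + 1) := by omega
    rw [ih]
    show X.2 (k + 1 + n) = X.2 (k + (n + 1))
    rw [harg]

lemma Mop_iter_fst_succ (X : Phase N) (n : ℕ) :
    ((Mop (N := N))^[n+1] X).1
      = Function.update ((Mop (N := N))^[n] X).1 (X.2 n).1 (X.2 n).2 := by
  rw [Function.iterate_succ_apply']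
  have h0 : ((Mop (N := N))^[n] X).2 0 = X.2 n := by simp [Mop_iter_snd]
  simp [Mop, h0]

lemma Mop_iter_fst_congr (X Y : Phase N) (n : ℕ) (h1 : X.1 = Y.1)
    (h2 : ∀ k < n, X.2 k = Y.2 k) :
    ((Mop (N := N))^[n] X).1 = ((Mop (N := N))^[n] Y).1 := by
  induction n with
  | zero => simpa
  | succ n ih =>
    rw [Mop_iter_fst_succ, Mop_iter_fst_succ, ih (fun k hk => h2 k (by omega)),
      h2 n (by omega)]

lemma Mop_iter_fst_update (Y : Phase N) (m : ℕ) (v : Fin N → Fin 4)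
    (hmid : ∀ i : Fin N, Y.2 (m + i.val) = (i, v i)) :
    ∀ t, t ≤ N → ∀ j : Fin N,
      ((Mop (N := N))^[m + t] Y).1 j
        = if j.val < t then v j else ((Mop (N := N))^[m] Y).1 j := by
  intro t
  induction t with
  | zero => simp
  | succ t ih =>
    intro ht j
    have htN : t < N := ht
    rw [show m + (t + 1) = (m + t) + 1 from rfl, Mop_iter_fst_succ]
    have hmt : Y.2 (m + t) = (⟨t, htN⟩, v ⟨t, htN⟩) := hmid ⟨t, htN⟩
    rw [hmt]
    simp only [Function.update_apply]
    by_cases hj : j = ⟨t, htN⟩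
    · subst hj; simp
    · rw [if_neg hj, ih (by omega) j]
      have hne : j.val ≠ t := fun h => hj (Fin.ext h)
      by_cases h2 : j.val < t
      · rw [if_pos h2, if_pos (by omega)]
      · rw [if_neg h2, if_neg (by omega)]

lemma fin4_ne_add_one (a : Fin 4) : a ≠ a + 1 := by fin_cases a <;> decide

lemma fin4_val_ne (a : Fin 4) : (a + 1).val ≠ a.val := by fin_cases a <;> decide

lemma Fdel_bound (hN : 1 ≤ N) (p p' : Fin N) (q : Fin 4)
    (hp' : p'.val = if 2 * p.val + 1 < N then N - 1 else 0) :
    ((N / 2 + 1 : ℕ) : ℝ) ≤ Fdel (mutR (p, q) - mutR (p', q + 1)) := by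
  have hpN : p.val < N := p.2
  unfold Fdel mutR
  simp only [Prod.fst_sub, Prod.snd_sub]
  have hq : ddelta 0 (((q.val : ℝ) + 1) - (((q + 1 : Fin 4).val : ℝ) + 1)) = 1 := by
    unfold ddelta
    rw [if_neg]
    intro hcontra
    have : ((q + 1 : Fin 4).val : ℝ) = (q.val : ℝ) := by linarith
    exact fin4_val_ne q (by exact_mod_cast this)
  rw [hq]
  have habs : ((p.val : ℝ) + 1) - ((p'.val : ℝ) + 1) = (p.val : ℝ) - (p'.val : ℝ) := by ring
  rw [habs]
  by_cases hc : 2 * p.val + 1 < N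
  · rw [if_pos hc] at hp'
    rw [hp']
    have hle : p.val ≤ N - 1 := by omega
    have h1 : (p.val : ℝ) ≤ ((N - 1 : ℕ) : ℝ) := by exact_mod_cast hle
    rw [abs_sub_comm, abs_of_nonneg (by linarith)]
    have hnat : N / 2 + 1 ≤ (N - 1 - p.val) + 1 := by omega
    calc ((N / 2 + 1 : ℕ) : ℝ) ≤ ((N - 1 - p.val + 1 : ℕ) : ℝ) := by exact_mod_cast hnat
      _ = ((N - 1 : ℕ) : ℝ) - (p.val : ℝ) + 1 := by
          rw [Nat.cast_add, Nat.cast_one, Nat.cast_sub hle]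
  · rw [if_neg hc] at hp'
    rw [hp']
    rw [Nat.cast_zero, sub_zero, abs_of_nonneg (Nat.cast_nonneg _)]
    have hnat : N / 2 + 1 ≤ p.val + 1 := by omega
    exact_mod_cast hnat

end AuxLemmas


/-- The mutation operator `M` has sensitive dependence on initial conditions on
`(X_N, d)` with sensitivity constant `δ₀ = N + (⌊N/2⌋ + 1)/N > 0`: for every `X ∈ X_N`
and every `ε > 0` there exist `Y ∈ B(X, ε)` and `n ∈ ℕ` with `d(M^n(X), M^n(Y)) ≥ δ₀`. -/
theorem Mop_sensitive (N : ℕ) (hN : 1 ≤ N) :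
    (0 : ℝ) < (N : ℝ) + ((N / 2 + 1 : ℕ) : ℝ) / (N : ℝ) ∧
    ∀ X : Phase N, ∀ ε > (0 : ℝ),
      ∃ Y : Phase N, dX X Y < ε ∧ ∃ n : ℕ,
        (N : ℝ) + ((N / 2 + 1 : ℕ) : ℝ) / (N : ℝ) ≤
          dX ((Mop (N := N))^[n] X) ((Mop (N := N))^[n] Y) := by
  have hNpos : (0:ℝ) < N := by exact_mod_cast hN
  constructor
  · positivity
  intro X ε hε
  obtain ⟨m, hm⟩ := exists_pow_lt_of_lt_one hε (show (1:ℝ)/10 < 1 by norm_num)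
  set n := m + N with hn
  set GX := ((Mop (N := N))^[n] X).1 with hGX
  set v : Fin N → Fin 4 := fun i => GX i + 1 with hv
  set pos' : Fin N → Fin N := fun p =>
    if 2 * p.val + 1 < N then ⟨N - 1, by omega⟩ else ⟨0, by omega⟩ with hpos
  set S' : MutSeq N := fun j =>
    if j < m then X.2 j
    else if h : j < n then (⟨j - m, by omega⟩, v ⟨j - m, by omega⟩)
    else (pos' (X.2 j).1, (X.2 j).2 + 1) with hS'
  have hagree : ∀ k < m, X.2 k = S' k := by
    intro k hk
    simp only [hS']
    rw [if_pos hk]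
  refine ⟨(X.1, S'), ?_, n, ?_⟩
  · -- dX X (X.1, S') < ε
    have hdG0 : dG X.1 X.1 = 0 := by unfold dG; simp
    have hdS : dS X.2 S' ≤ ((1:ℝ)/10) ^ m := dS_le_of_agree hN X.2 S' m hagree
    unfold dX
    simp only [hdG0, zero_add]
    exact lt_of_le_of_lt hdS hm
  · -- sensitivity at time n
    have hmid : ∀ i : Fin N, ((X.1, S') : Phase N).2 (m + i.val) = (i, v i) := by
      intro i
      show S' (m + i.val) = (i, v i)
      simp only [hS']
      rw [if_neg (by omega), dif_pos (show m + i.val < n by have := i.isLt; omega)]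
      have heq : m + i.val - m = i.val := by omega
      simp only [heq, Fin.eta]
    have hB : ∀ j : Fin N, ((Mop (N := N))^[n] ((X.1, S') : Phase N)).1 j = v j := by
      intro j
      have h := Mop_iter_fst_update ((X.1, S') : Phase N) m v hmid N le_rfl j
      rw [if_pos j.isLt] at h
      rw [hn]
      exact h
    have hdG : dG ((Mop (N := N))^[n] X).1 ((Mop (N := N))^[n] ((X.1, S') : Phase N)).1
        = N := by
      unfold dG
      have hterm : ∀ j : Fin N,
          (if ((Mop (N := N))^[n] X).1 j
              = ((Mop (N := N))^[n] ((X.1, S') : Phase N)).1 j then (0:ℝ) else 1) = 1 := by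
        intro j
        rw [if_neg]
        rw [hB j, hv]
        exact fin4_ne_add_one (GX j)
      rw [Finset.sum_congr rfl (fun j _ => hterm j), Finset.sum_const, Finset.card_univ,
        Fintype.card_fin, nsmul_eq_mul, mul_one]
    have hdS : ((N / 2 + 1 : ℕ) : ℝ) / N ≤
        dS ((Mop (N := N))^[n] X).2 ((Mop (N := N))^[n] ((X.1, S') : Phase N)).2 := by
      rw [Mop_iter_snd, Mop_iter_snd]
      apply dS_ge hN
      intro k
      have h1 : ((X.1, S') : Phase N).2 (k + n)
          = (pos' (X.2 (k + n)).1, (X.2 (k + n)).2 + 1) := by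
        show S' (k + n) = _
        simp only [hS']
        rw [if_neg (by omega), dif_neg (by omega)]
      rw [h1]
      apply Fdel_bound hN
      simp only [hpos]
      by_cases hc : 2 * (X.2 (k + n)).1.val + 1 < N
      · rw [if_pos hc, if_pos hc]
      · rw [if_neg hc, if_neg hc]
    unfold dX
    rw [hdG]
    linarith
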